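/- (Lemma 5, second part) Fix i ∈ {0, …, n−1}, b_1 ≠ b_2 ∈ {1, …, d−k+h}, v ∈ {1, …, s−1}, and a helper set R ⊆ {0, …, n−1} \ {i} with |R| = d. If two codewords c, c' ∈ C satisfy c_{u,b_1,a} + c_{u,b_2,a(i,v)} = c'_{u,b_1,a} + c'_{u,b_2,a(i,v)} for all u ∈ R and all a ∈ V_i, then c_{i,b_1,a(i,e)} = c'_{i,b_1,a(i,e)} for all a ∈ V_i and all e ∈ {1, …, s−1}; equivalently, node i's layer-b_1 symbols c_{i,b_1,a} are determined by the downloaded sums for every a with a_i ≠ 0. -/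

import Mathlib

open Finset

private lemma vand_fin {F : Type*} [Field F] {m : ℕ} (p z : Fin m → F)
    (hp : Function.Injective p) (hz : ∀ t < m, ∑ j, p j ^ t * z j = 0) : ∀ j, z j = 0 := by
  have hdet : ((Matrix.vandermonde p).transpose).det ≠ 0 := by
    rw [Matrix.det_transpose]
    exact Matrix.det_vandermonde_ne_zero_iff.mpr hp
  have hU : IsUnit ((Matrix.vandermonde p).transpose) := (Matrix.isUnit_iff_isUnit_det _).mpr hdet.isUnit
  have hinj : Function.Injective ((Matrix.vandermonde p).transpose).mulVec :=
    Matrix.mulVec_injective_iff_isUnit.mpr hU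
  have h0 : ((Matrix.vandermonde p).transpose).mulVec z = ((Matrix.vandermonde p).transpose).mulVec 0 := by
    rw [Matrix.mulVec_zero]
    funext t
    simpa [Matrix.mulVec, Matrix.vandermonde, dotProduct] using hz t t.isLt
  have hzz := hinj h0
  intro j
  rw [hzz]
  rfl

private lemma vand_finset {F : Type*} [Field F] {ι : Type*} (T : Finset ι)
    (p z : ι → F) (hp : Set.InjOn p T)
    (hz : ∀ t < T.card, ∑ j ∈ T, p j ^ t * z j = 0) : ∀ j ∈ T, z j = 0 := by
  intro j hj
  set e := T.equivFin with he
  set p' : Fin T.card → F := fun x => p (e.symm x) with hp'def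
  set z' : Fin T.card → F := fun x => z (e.symm x) with hz'def
  have hp' : Function.Injective p' := by
    intro x y hxy
    have := hp (e.symm x).2 (e.symm y).2 hxy
    simpa using e.symm.injective (Subtype.ext this)
  have hsum : ∀ t < T.card, ∑ x, p' x ^ t * z' x = 0 := by
    intro t ht
    rw [← hz t ht, ← Finset.sum_attach T (fun j => p j ^ t * z j)]
    exact Equiv.sum_comp e.symm (fun x : T => p x ^ t * z x)
  have := vand_fin p' z' hp' hsum (e ⟨j, hj⟩)
  simpa [hp'def, hz'def] using this

/-- The code `C` of Construction 1: arrays `c = (c_{i,b,a})` with `i ∈ [0,n)`,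
`b ∈ {1,…,B}` (here `B = d-k+h`; entries of `c` with `b` outside this range are
irrelevant), and `a ∈ {0,…,s-1}^n`, satisfying the parity-check equations
`∑_i λ_i^t c_{i,b,a} + ∑_i δ(a_i) ∑_{e=1}^{s-1} μ_e^t c_{i,b,a(i,e)} = 0`
for all `t ∈ [0,r)`, all `b ∈ {1,…,B}`, and all `a`. -/
def codeC {F : Type*} [Field F] (n r s B : ℕ) (lam : Fin n → F) (mu : Fin s → F)
    (c : Fin n → ℕ → (Fin n → Fin s) → F) : Prop :=
  ∀ t < r, ∀ b : ℕ, 1 ≤ b → b ≤ B → ∀ a : Fin n → Fin s,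
    ∑ i, lam i ^ t * c i b a
      + ∑ i, (if (a i : ℕ) = 0 then
          ∑ e ∈ univ.filter (fun e : Fin s => (e : ℕ) ≠ 0),
            mu e ^ t * c i b (Function.update a i e)
        else 0) = 0

/-- Lemma 5, second part: if two codewords of `C` agree on the downloaded sums
`c_{u,b₁,a} + c_{u,b₂,a(i,v)}` for all helper nodes `u ∈ R` (`|R| = d`,
`i ∉ R`) and all `a ∈ V_i`, then they agree on node `i`'s layer-`b₁` symbols
`c_{i,b₁,a(i,e)}` for all `a ∈ V_i` and all `e ∈ {1,…,s-1}`. -/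
theorem node_i_layer_b1_recovered
    {F : Type*} [Field F] [Fintype F]
    (n k d h r s N : ℕ) (hk0 : 0 < k) (hr0 : 0 < r) (hh : 1 ≤ h)
    (hnk : n = k + r) (hkd : k < d) (hdn : d + h ≤ n)
    (hs : s = d - k + 1) (hN : N = (d - k + h) * s ^ n)
    (lam : Fin n → F) (mu : Fin s → F)
    (hlam : Function.Injective lam)
    (hmu : ∀ e e' : Fin s, (e : ℕ) ≠ 0 → (e' : ℕ) ≠ 0 → mu e = mu e' → e = e')
    (hlammu : ∀ (i : Fin n) (e : Fin s), (e : ℕ) ≠ 0 → lam i ≠ mu e)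
    (c c' : Fin n → ℕ → (Fin n → Fin s) → F)
    (hc : codeC n r s (d - k + h) lam mu c) (hc' : codeC n r s (d - k + h) lam mu c')
    (i : Fin n) (v : Fin s) (hv : (v : ℕ) ≠ 0)
    (b1 b2 : ℕ) (hb1 : 1 ≤ b1) (hb1' : b1 ≤ d - k + h)
    (hb2 : 1 ≤ b2) (hb2' : b2 ≤ d - k + h) (hb12 : b1 ≠ b2)
    (R : Finset (Fin n)) (hiR : i ∉ R) (hR : R.card = d)
    (hdownload : ∀ u ∈ R, ∀ a : Fin n → Fin s, (a i : ℕ) = 0 →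
      c u b1 a + c u b2 (Function.update a i v)
        = c' u b1 a + c' u b2 (Function.update a i v)) :
    ∀ a : Fin n → Fin s, (a i : ℕ) = 0 → ∀ e : Fin s, (e : ℕ) ≠ 0 →
      c i b1 (Function.update a i e) = c' i b1 (Function.update a i e) := by
  have hs0 : 0 < s := by omega
  set Es : Finset (Fin s) := univ.filter (fun e : Fin s => (e : ℕ) ≠ 0) with hEs
  set f : Fin n → ℕ → (Fin n → Fin s) → F := fun u b a => c u b a - c' u b a with hfdef
  -- f satisfies the parity checks
  have hf : ∀ t < r, ∀ b : ℕ, 1 ≤ b → b ≤ d - k + h → ∀ a : Fin n → Fin s,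
      ∑ u, lam u ^ t * f u b a
        + ∑ u, (if (a u : ℕ) = 0 then
            ∑ e ∈ Es, mu e ^ t * f u b (Function.update a u e) else 0) = 0 := by
    intro t ht b hb hb' a
    have h1 := hc t ht b hb hb' a
    have h2 := hc' t ht b hb hb' a
    rw [← hEs] at h1 h2
    have hlamsub : ∑ u, lam u ^ t * f u b a
        = ∑ u, lam u ^ t * c u b a - ∑ u, lam u ^ t * c' u b a := by
      simp [hfdef, mul_sub, Finset.sum_sub_distrib]
    have hsplit : ∀ u : Fin n,
        (if (a u : ℕ) = 0 then ∑ e ∈ Es, mu e ^ t * f u b (Function.update a u e) else 0)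
          = (if (a u : ℕ) = 0 then ∑ e ∈ Es, mu e ^ t * c u b (Function.update a u e) else 0)
            - (if (a u : ℕ) = 0 then ∑ e ∈ Es, mu e ^ t * c' u b (Function.update a u e) else 0) := by
      intro u
      split
      · simp [hfdef, mul_sub, Finset.sum_sub_distrib]
      · simp
    have hsum2 : ∑ u, (if (a u : ℕ) = 0 then
          ∑ e ∈ Es, mu e ^ t * f u b (Function.update a u e) else 0)
        = ∑ u, (if (a u : ℕ) = 0 then ∑ e ∈ Es, mu e ^ t * c u b (Function.update a u e) else 0)
          - ∑ u, (if (a u : ℕ) = 0 then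
              ∑ e ∈ Es, mu e ^ t * c' u b (Function.update a u e) else 0) := by
      rw [← Finset.sum_sub_distrib]
      exact Finset.sum_congr rfl fun u _ => hsplit u
    rw [hlamsub, hsum2]
    linear_combination h1 - h2
  set g : Fin n → (Fin n → Fin s) → F :=
    fun u a => f u b1 a + f u b2 (Function.update a i v) with hgdef
  -- downloaded sums vanish for f
  have hg0 : ∀ u ∈ R, ∀ a : Fin n → Fin s, (a i : ℕ) = 0 → g u a = 0 := by
    intro u hu a ha
    have hd := hdownload u hu a ha
    simp only [hgdef, hfdef]
    linear_combination hd
  -- the key combined parity equation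
  have hkey : ∀ t < r, ∀ a : Fin n → Fin s, (a i : ℕ) = 0 →
      ∑ u, lam u ^ t * g u a
      + ∑ u ∈ univ.erase i, (if (a u : ℕ) = 0 then
          ∑ e ∈ Es, mu e ^ t * g u (Function.update a u e) else 0)
      + ∑ e ∈ Es, mu e ^ t * f i b1 (Function.update a i e) = 0 := by
    intro t ht a ha
    have h1 := hf t ht b1 hb1 hb1' a
    have h2 := hf t ht b2 hb2 hb2' (Function.update a i v)
    nth_rewrite 2 [← Finset.sum_erase_add univ _ (mem_univ i)] at h1
    rw [if_pos ha] at h1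
    nth_rewrite 2 [← Finset.sum_erase_add univ _ (mem_univ i)] at h2
    rw [Function.update_self] at h2
    rw [if_neg hv, add_zero] at h2
    have hC : ∑ u ∈ univ.erase i,
        (if ((Function.update a i v u : ℕ) = 0) then
          ∑ e ∈ Es, mu e ^ t * f u b2 (Function.update (Function.update a i v) u e) else 0)
        = ∑ u ∈ univ.erase i, (if (a u : ℕ) = 0 then
            ∑ e ∈ Es, mu e ^ t * f u b2 (Function.update (Function.update a u e) i v) else 0) := by
      apply Finset.sum_congr rfl
      intro u hu
      have hui : u ≠ i := Finset.ne_of_mem_erase hu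
      rw [Function.update_of_ne hui]
      simp only [Function.update_comm (Ne.symm hui)]
    rw [hC] at h2
    have hlamsplit : ∑ u, lam u ^ t * g u a
        = ∑ u, lam u ^ t * f u b1 a + ∑ u, lam u ^ t * f u b2 (Function.update a i v) := by
      simp only [hgdef, mul_add, Finset.sum_add_distrib]
    have hmusplit : ∑ u ∈ univ.erase i, (if (a u : ℕ) = 0 then
          ∑ e ∈ Es, mu e ^ t * g u (Function.update a u e) else 0)
        = (∑ u ∈ univ.erase i, (if (a u : ℕ) = 0 then
            ∑ e ∈ Es, mu e ^ t * f u b1 (Function.update a u e) else 0))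
          + ∑ u ∈ univ.erase i, (if (a u : ℕ) = 0 then
            ∑ e ∈ Es, mu e ^ t * f u b2 (Function.update (Function.update a u e) i v) else 0) := by
      simp only [hgdef, mul_add, Finset.sum_add_distrib]
      rw [← Finset.sum_add_distrib]
      apply Finset.sum_congr rfl
      intro u hu
      split
      · rfl
      · simp
    rw [hlamsplit, hmusplit]
    linear_combination h1 + h2
  -- cardinalities
  have hEscard : Es.card = s - 1 := by
    have : Es = univ.erase (⟨0, hs0⟩ : Fin s) := by
      ext e
      simp [hEs, Fin.ext_iff]
    rw [this, Finset.card_erase_of_mem (mem_univ _), Finset.card_univ, Fintype.card_fin]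
  -- the finishing step via Vandermonde
  have finish : ∀ a : Fin n → Fin s, (a i : ℕ) = 0 →
      (∀ u, u ∉ R → u ≠ i → (a u : ℕ) = 0 → ∀ e : Fin s, (e : ℕ) ≠ 0 →
        g u (Function.update a u e) = 0) →
      (∀ u, u ∉ R → g u a = 0) ∧
        (∀ e : Fin s, (e : ℕ) ≠ 0 → f i b1 (Function.update a i e) = 0) := by
    intro a ha hcross
    have hred : ∀ t < r, ∑ u ∈ Rᶜ, lam u ^ t * g u a
        + ∑ e ∈ Es, mu e ^ t * f i b1 (Function.update a i e) = 0 := by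
      intro t ht
      have hk := hkey t ht a ha
      have h1 : ∑ u ∈ Rᶜ, lam u ^ t * g u a = ∑ u, lam u ^ t * g u a := by
        apply Finset.sum_subset (Finset.subset_univ _)
        intro u _ hu
        rw [hg0 u (by simpa using hu) a ha, mul_zero]
      have h2 : ∑ u ∈ univ.erase i, (if (a u : ℕ) = 0 then
          ∑ e ∈ Es, mu e ^ t * g u (Function.update a u e) else 0) = 0 := by
        apply Finset.sum_eq_zero
        intro u hu
        have hui : u ≠ i := Finset.ne_of_mem_erase hu
        by_cases hau : (a u : ℕ) = 0
        · rw [if_pos hau]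
          apply Finset.sum_eq_zero
          intro e he
          have he' : (e : ℕ) ≠ 0 := (Finset.mem_filter.mp he).2
          by_cases huR : u ∈ R
          · rw [hg0 u huR _ (by rw [Function.update_of_ne (Ne.symm hui)]; exact ha), mul_zero]
          · rw [hcross u huR hui hau e he', mul_zero]
        · rw [if_neg hau]
      rw [h1]
      rw [h2] at hk
      linear_combination hk
    set T : Finset (Fin n ⊕ Fin s) := Rᶜ.disjSum Es with hT
    have hcard : T.card = r := by
      rw [hT, Finset.card_disjSum, Finset.card_compl, hR, Fintype.card_fin, hEscard]
      omega
    set p : Fin n ⊕ Fin s → F := Sum.elim lam mu with hp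
    set z : Fin n ⊕ Fin s → F :=
      Sum.elim (fun u => g u a) (fun e => f i b1 (Function.update a i e)) with hz
    have hinj : Set.InjOn p T := by
      rw [hT]
      intro x hx y hy hxy
      rw [Finset.mem_coe] at hx hy
      simp only [hp] at hxy
      match x, y with
      | Sum.inl u, Sum.inl u' =>
        simp only [Sum.elim_inl] at hxy
        exact congrArg Sum.inl (hlam hxy)
      | Sum.inl u, Sum.inr e' =>
        simp only [Sum.elim_inl, Sum.elim_inr] at hxy
        have he' : (e' : ℕ) ≠ 0 := (Finset.mem_filter.mp (Finset.inr_mem_disjSum.mp hy)).2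
        exact absurd hxy (hlammu u e' he')
      | Sum.inr e, Sum.inl u' =>
        simp only [Sum.elim_inl, Sum.elim_inr] at hxy
        have he : (e : ℕ) ≠ 0 := (Finset.mem_filter.mp (Finset.inr_mem_disjSum.mp hx)).2
        exact absurd hxy.symm (hlammu u' e he)
      | Sum.inr e, Sum.inr e' =>
        simp only [Sum.elim_inr] at hxy
        exact congrArg Sum.inr (hmu e e'
          (Finset.mem_filter.mp (Finset.inr_mem_disjSum.mp hx)).2
          (Finset.mem_filter.mp (Finset.inr_mem_disjSum.mp hy)).2 hxy)
    have hzero := vand_finset T p z hinj (by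
      intro t ht
      rw [hcard] at ht
      rw [hT, Finset.sum_disjSum]
      simp only [hp, hz, Sum.elim_inl, Sum.elim_inr]
      exact hred t ht)
    constructor
    · intro u hu
      have := hzero (Sum.inl u) (by rw [hT, Finset.inl_mem_disjSum, Finset.mem_compl]; exact hu)
      simpa [hz] using this
    · intro e he
      have := hzero (Sum.inr e) (by
        rw [hT, Finset.inr_mem_disjSum, hEs, Finset.mem_filter]
        exact ⟨mem_univ _, he⟩)
      simpa [hz] using this
  -- main induction on the number of zero coordinates outside R ∪ {i}
  have main : ∀ m : ℕ, ∀ a : Fin n → Fin s, (a i : ℕ) = 0 →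
      (univ.filter (fun u => u ∉ R ∧ u ≠ i ∧ (a u : ℕ) = 0)).card ≤ m →
      (∀ u, u ∉ R → g u a = 0) ∧
        (∀ e : Fin s, (e : ℕ) ≠ 0 → f i b1 (Function.update a i e) = 0) := by
    intro m
    induction m with
    | zero =>
      intro a ha hcard
      apply finish a ha
      intro u huR hui hau e he
      exfalso
      have hm : u ∈ univ.filter (fun u => u ∉ R ∧ u ≠ i ∧ (a u : ℕ) = 0) :=
        Finset.mem_filter.mpr ⟨mem_univ u, huR, hui, hau⟩
      have := Finset.card_pos.mpr ⟨u, hm⟩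
      omega
    | succ m ih =>
      intro a ha hcard
      apply finish a ha
      intro u huR hui hau e he
      have ha' : ((Function.update a u e) i : ℕ) = 0 := by
        rw [Function.update_of_ne (Ne.symm hui)]; exact ha
      have hm : u ∈ univ.filter (fun u => u ∉ R ∧ u ≠ i ∧ (a u : ℕ) = 0) :=
        Finset.mem_filter.mpr ⟨mem_univ u, huR, hui, hau⟩
      have hset : univ.filter (fun w => w ∉ R ∧ w ≠ i ∧ ((Function.update a u e) w : ℕ) = 0)
          = (univ.filter (fun w => w ∉ R ∧ w ≠ i ∧ (a w : ℕ) = 0)).erase u := by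
        ext w
        simp only [Finset.mem_erase, Finset.mem_filter, Finset.mem_univ, true_and]
        by_cases hwu : w = u
        · subst hwu
          simp [Function.update_self, he]
        · rw [Function.update_of_ne hwu]
          simp [hwu]
      have hc2 : (univ.filter
          (fun w => w ∉ R ∧ w ≠ i ∧ ((Function.update a u e) w : ℕ) = 0)).card ≤ m := by
        rw [hset, Finset.card_erase_of_mem hm]
        omega
      exact (ih (Function.update a u e) ha' hc2).1 u huR
  intro a ha e he
  have := (main _ a ha le_rfl).2 e he
  simp only [hfdef] at this
  exact sub_eq_zero.mp this
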